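/- arXiv:1705.00302 — 4 statements merged into one kernel-verified Lean document; each statement's English description precedes it below -/
import Mathlib

section
/- Let (X,μ) be a probability space, a < b real numbers, and f : X → ℝ measurable with a ≤ f ≤ b almost surely. Then the KL divergence of the Gibbs measure from μ satisfies D(μ_{|e^f} ‖ μ) ≤ (b-a)². -/
open MeasureTheory Real Classical

/-- Kullback–Leibler divergence `D(ν‖μ)` with values in `EReal`. -/
noncomputable def klDivE {X : Type*} [MeasurableSpace X] (ν μ : Measure X) : EReal :=
  if ν ≪ μ ∧ Integrable (fun x => Real.log ((ν.rnDeriv μ x).toReal)) ν then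
    ((∫ x, Real.log ((ν.rnDeriv μ x).toReal) ∂ν : ℝ) : EReal)
  else ⊤

/-- If `a ≤ f ≤ b` almost surely then the Gibbs measure `μ_{|e^f} = μ.tilted f`
satisfies `D(μ_{|e^f} ‖ μ) ≤ (b-a)²`. -/
theorem klDiv_tilted_le {X : Type*} [MeasurableSpace X]
    (μ : Measure X) [IsProbabilityMeasure μ] (a b : ℝ) (hab : a < b)
    (f : X → ℝ) (hf : Measurable f) (hbd : ∀ᵐ x ∂μ, f x ∈ Set.Icc a b) :
    klDivE (μ.tilted f) μ ≤ (((b - a) ^ 2 : ℝ) : EReal) := by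
  set c : ℝ := b - a with hc_def
  have hc : 0 < c := sub_pos.2 hab
  set g : X → ℝ := fun x => f x - a with hg_def
  have hg : Measurable g := hf.sub measurable_const
  have hbd' : ∀ᵐ x ∂μ, g x ∈ Set.Icc 0 c := by
    filter_upwards [hbd] with x hx
    exact ⟨sub_nonneg.2 hx.1, sub_le_sub_right hx.2 a⟩
  -- integrability facts
  have hexpg : Integrable (fun x => exp (g x)) μ := by
    refine Integrable.mono' (integrable_const (exp c)) (hg.exp).aestronglyMeasurable ?_
    filter_upwards [hbd'] with x hx
    rw [Real.norm_eq_abs, abs_of_pos (exp_pos _)]; exact exp_le_exp.2 hx.2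
  have hge : Integrable (fun x => g x * exp (g x)) μ := by
    refine Integrable.mono' (integrable_const (c * exp c)) (hg.mul hg.exp).aestronglyMeasurable ?_
    filter_upwards [hbd'] with x hx
    rw [Real.norm_eq_abs, abs_of_nonneg (mul_nonneg hx.1 (exp_pos _).le)]
    exact mul_le_mul hx.2 (exp_le_exp.2 hx.2) (exp_pos _).le hc.le
  -- reduce tilting by `f` to tilting by `g`
  have hPg : IsProbabilityMeasure (μ.tilted g) := isProbabilityMeasure_tilted hexpg
  have htf : μ.tilted f = μ.tilted g := by
    have h1 : (μ.tilted g).tilted (fun _ => a) = μ.tilted (g + fun _ => a) :=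
      tilted_tilted hexpg _
    have h2 : (μ.tilted g).tilted (fun _ => a) = μ.tilted g := tilted_const _ a
    have h3 : (g + fun _ => a) = f := by funext x; simp [hg_def]
    rw [h3] at h1
    rw [← h1, h2]
  set ν : Measure X := μ.tilted g with hν_def
  set W : ℝ := ∫ x, exp (g x) ∂μ with hW_def
  have hWpos : 0 < W := integral_exp_pos hexpg
  have hW1 : (1:ℝ) ≤ W := by
    calc (1:ℝ) = ∫ _, (1:ℝ) ∂μ := by simp
    _ ≤ ∫ x, exp (g x) ∂μ := by
        refine integral_mono_ae (integrable_const 1) hexpg ?_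
        filter_upwards [hbd'] with x hx
        calc (1:ℝ) = exp 0 := by simp
        _ ≤ exp (g x) := exp_le_exp.2 hx.1
  have hac : ν ≪ μ := tilted_absolutelyContinuous μ g
  -- the log of the Radon–Nikodym derivative
  have hlog : (fun x => Real.log ((ν.rnDeriv μ x).toReal)) =ᵐ[μ]
      fun x => g x - Real.log W := log_rnDeriv_tilted_left_self hexpg
  have hlogν : (fun x => Real.log ((ν.rnDeriv μ x).toReal)) =ᵐ[ν]
      fun x => g x - Real.log W := hac.ae_eq hlog
  have hbdν : ∀ᵐ x ∂ν, g x ∈ Set.Icc 0 c := hac.ae_le hbd'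
  have hmeas_log : AEStronglyMeasurable (fun x => Real.log ((ν.rnDeriv μ x).toReal)) ν :=
    ((Measure.measurable_rnDeriv ν μ).ennreal_toReal.log).aestronglyMeasurable
  have hint_log : Integrable (fun x => Real.log ((ν.rnDeriv μ x).toReal)) ν := by
    refine Integrable.mono' (integrable_const (c + |Real.log W|)) hmeas_log ?_
    filter_upwards [hlogν, hbdν] with x hx hx2
    rw [hx, Real.norm_eq_abs]
    calc |g x - Real.log W| ≤ |g x| + |Real.log W| := abs_sub _ _
    _ ≤ c + |Real.log W| := by
        gcongr
        rw [abs_of_nonneg hx2.1]; exact hx2.2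
  -- evaluate klDivE
  rw [htf]
  rw [klDivE, if_pos ⟨hac, hint_log⟩]
  rw [EReal.coe_le_coe_iff]
  have hgintν : Integrable g ν := by
    refine Integrable.mono' (integrable_const c) hg.aestronglyMeasurable ?_
    filter_upwards [hbdν] with x hx
    rw [Real.norm_eq_abs, abs_of_nonneg hx.1]; exact hx.2
  have hval : ∫ x, Real.log ((ν.rnDeriv μ x).toReal) ∂ν = (∫ x, g x ∂ν) - Real.log W := by
    rw [integral_congr_ae hlogν, integral_sub hgintν (integrable_const _), integral_const]
    simp
  rw [hval]
  have hIν : ∫ x, g x ∂ν = (∫ x, g x * exp (g x) ∂μ) / W := by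
    rw [hν_def, integral_tilted]
    rw [← integral_div]
    congr 1; funext x; simp [smul_eq_mul]; ring
  set A : ℝ := ∫ x, g x * exp (g x) ∂μ with hA_def
  rw [hIν]
  rcases le_or_gt 1 c with h1c | h1c
  · -- easy case : c ≥ 1
    have hAle : A / W ≤ c := by
      rw [← hIν]
      calc ∫ x, g x ∂ν ≤ ∫ _, c ∂ν := by
            refine integral_mono_ae hgintν (integrable_const c) ?_
            filter_upwards [hbdν] with x hx using hx.2
      _ = c := by simp
    have hlogW : 0 ≤ Real.log W := Real.log_nonneg hW1
    nlinarith
  · -- hard case : c ≤ 1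
    have hT : A - W + 1 ≤ c ^ 2 := by
      have : A - W + 1 = ∫ x, (g x * exp (g x) - exp (g x) + 1) ∂μ := by
        have hsub : Integrable (fun x => g x * exp (g x) - exp (g x)) μ := hge.sub hexpg
        rw [integral_add hsub (integrable_const 1), integral_sub hge hexpg, integral_const]
        simp [hW_def, hA_def]
      rw [this]
      calc ∫ x, (g x * exp (g x) - exp (g x) + 1) ∂μ ≤ ∫ _, c ^ 2 ∂μ := by
            have hsub : Integrable (fun x => g x * exp (g x) - exp (g x)) μ := hge.sub hexpg
            refine integral_mono_ae (hsub.add (integrable_const 1)) (integrable_const _) ?_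
            filter_upwards [hbd'] with x hx
            have h1 : g x + 1 ≤ exp (g x) := Real.add_one_le_exp (g x)
            have h2 : g x ≤ 1 := hx.2.trans h1c.le
            have h3 : g x * exp (g x) - exp (g x) + 1 ≤ (g x) ^ 2 := by nlinarith
            have h4 : (g x) ^ 2 ≤ c ^ 2 := by nlinarith [hx.1, hx.2]
            linarith
      _ = c ^ 2 := by simp
    have hlogW : 1 - W⁻¹ ≤ Real.log W := by
      have := Real.log_le_sub_one_of_pos (x := W⁻¹) (by positivity)
      rw [Real.log_inv] at this
      linarith
    have hWinv : W⁻¹ ≤ 1 := inv_le_one_of_one_le₀ hW1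
    have : A / W - Real.log W ≤ (A - W + 1) / W := by
      have heq : (A - W + 1) / W = A / W - 1 + W⁻¹ := by field_simp
      linarith
    calc A / W - Real.log W ≤ (A - W + 1) / W := this
    _ ≤ c ^ 2 := by
        rcases le_or_gt 0 (A - W + 1) with h | h
        · calc (A - W + 1) / W ≤ (A - W + 1) / 1 := by gcongr
          _ ≤ c ^ 2 := by rw [div_one]; exact hT
        · have : (A - W + 1) / W < 0 := div_neg_of_neg_of_pos h hWpos
          nlinarith
end

section
/- For any finite mixture μ = p₁μ₁ + ⋯ + p_kμ_k of probability measures on Aⁿ, the total correlations satisfy Σ_j p_j TC(μ_j) ≤ TC(μ) + H(p₁,…,p_k). -/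
open Finset

def IsPMF {S : Type*} [Fintype S] (p : S → ℝ) : Prop :=
  (∀ s, 0 ≤ p s) ∧ ∑ s, p s = 1

noncomputable def entropy {S : Type*} [Fintype S] (p : S → ℝ) : ℝ :=
  ∑ s, Real.negMulLog (p s)

noncomputable def marginal {A : Type*} [Fintype A] [DecidableEq A] {n : ℕ}
    (μ : (Fin n → A) → ℝ) (i : Fin n) : A → ℝ :=
  fun a => ∑ x : Fin n → A, if x i = a then μ x else 0

noncomputable def totalCorr {A : Type*} [Fintype A] [DecidableEq A] {n : ℕ}
    (μ : (Fin n → A) → ℝ) : ℝ :=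
  (∑ i, entropy (marginal μ i)) - entropy μ

/-- Concavity of entropy: `∑ j, p j * H(q j) ≤ H(∑ j, p j * q j)`. -/
lemma sum_entropy_le_entropy_mix {S : Type*} [Fintype S] {k : ℕ}
    (p : Fin k → ℝ) (q : Fin k → S → ℝ) (hp : IsPMF p)
    (hq : ∀ j s, 0 ≤ q j s) :
    ∑ j, p j * entropy (q j) ≤ entropy (fun s => ∑ j, p j * q j s) := by
  unfold entropy
  simp_rw [Finset.mul_sum]
  rw [Finset.sum_comm]
  apply Finset.sum_le_sum
  intro s _
  have := Real.concaveOn_negMulLog.le_map_sum (t := Finset.univ) (w := p)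
    (p := fun j => q j s) (fun j _ => hp.1 j) hp.2 (fun j _ => hq j s)
  simpa [smul_eq_mul] using this

/-- `H(mix) ≤ ∑ p j * H(μ j) + H(p)`. -/
lemma entropy_mix_le {S : Type*} [Fintype S] {k : ℕ}
    (p : Fin k → ℝ) (q : Fin k → S → ℝ) (hp : IsPMF p)
    (hq : ∀ j, IsPMF (q j)) :
    entropy (fun s => ∑ j, p j * q j s) ≤ ∑ j, p j * entropy (q j) + entropy p := by
  have key : ∀ s, Real.negMulLog (∑ j, p j * q j s)
      ≤ ∑ j, Real.negMulLog (p j * q j s) := by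
    intro s
    set T := ∑ j, p j * q j s with hT
    have hnn : ∀ j, 0 ≤ p j * q j s := fun j => mul_nonneg (hp.1 j) ((hq j).1 s)
    have hTnn : 0 ≤ T := Finset.sum_nonneg fun j _ => hnn j
    have : Real.negMulLog T = ∑ j, (-(p j * q j s) * Real.log T) := by
      rw [Real.negMulLog, ← Finset.sum_neg_distrib, ← Finset.sum_mul, hT]
    rw [this]
    apply Finset.sum_le_sum
    intro j _
    rcases eq_or_lt_of_le (hnn j) with h | h
    · simp [← h, Real.negMulLog]
    · have hle : p j * q j s ≤ T := Finset.single_le_sum (fun i _ => hnn i) (mem_univ j)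
      have := Real.log_le_log h hle
      rw [Real.negMulLog]
      nlinarith
  calc entropy (fun s => ∑ j, p j * q j s)
      ≤ ∑ s, ∑ j, Real.negMulLog (p j * q j s) :=
        Finset.sum_le_sum fun s _ => key s
    _ = ∑ j, ∑ s, (q j s * Real.negMulLog (p j) + p j * Real.negMulLog (q j s)) := by
        rw [Finset.sum_comm]; simp_rw [Real.negMulLog_mul]
    _ = ∑ j, (Real.negMulLog (p j) + p j * entropy (q j)) := by
        apply Finset.sum_congr rfl
        intro j _
        rw [Finset.sum_add_distrib, ← Finset.sum_mul, (hq j).2, one_mul, ← Finset.mul_sum]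
        rfl
    _ = ∑ j, p j * entropy (q j) + entropy p := by
        rw [Finset.sum_add_distrib, add_comm]
        rfl

/-- For a finite mixture `μ = ∑ j, p j • μ j` of probability measures on `Aⁿ`,
`∑ j p j * TC(μ j) ≤ TC(μ) + H(p)`. -/
theorem totalCorr_mixture {A : Type*} [Fintype A] [DecidableEq A] {n k : ℕ}
    (p : Fin k → ℝ) (μs : Fin k → (Fin n → A) → ℝ)
    (hp : IsPMF p) (hμ : ∀ j, IsPMF (μs j)) :
    ∑ j, p j * totalCorr (μs j) ≤
      totalCorr (fun x => ∑ j, p j * μs j x) + entropy p := by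
  have hmarg : ∀ i, marginal (fun x => ∑ j, p j * μs j x) i
      = fun a => ∑ j, p j * marginal (μs j) i a := by
    intro i; funext a
    unfold marginal
    simp only
    simp_rw [Finset.mul_sum, mul_ite, mul_zero]
    rw [Finset.sum_comm]
    apply Finset.sum_congr rfl
    intro x _
    split
    · rfl
    · simp
  have h1 : ∀ i, ∑ j, p j * entropy (marginal (μs j) i)
      ≤ entropy (marginal (fun x => ∑ j, p j * μs j x) i) := by
    intro i
    rw [hmarg i]
    exact sum_entropy_le_entropy_mix p (fun j => marginal (μs j) i) hp
      (fun j a => Finset.sum_nonneg fun x _ => by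
        split
        · exact (hμ j).1 x
        · exact le_refl 0)
  have h2 : entropy (fun x => ∑ j, p j * μs j x)
      ≤ ∑ j, p j * entropy (μs j) + entropy p :=
    entropy_mix_le p μs hp hμ
  unfold totalCorr
  simp_rw [mul_sub, Finset.sum_sub_distrib, Finset.mul_sum]
  rw [Finset.sum_comm]
  have := Finset.sum_le_sum (fun i (_ : i ∈ Finset.univ) => h1 i)
  linarith
end

section
/- If μ is a probability measure on Aⁿ, U ⊆ Aⁿ with μ(U) > 0, then TC(μ(·|U)) ≤ (TC(μ) + log 2)/μ(U). -/
open Finset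

section aux
variable {A : Type*} [Fintype A] [DecidableEq A] {n : ℕ}

lemma entropy_eq {S : Type*} [Fintype S] (p : S → ℝ) :
    entropy p = -∑ s, p s * Real.log (p s) := by
  simp [entropy, Real.negMulLog, neg_mul, Finset.sum_neg_distrib]

lemma sum_mul_comp (w : (Fin n → A) → ℝ) (i : Fin n) (g : A → ℝ) :
    ∑ x, w x * g (x i) = ∑ a, marginal w i a * g a := by
  unfold marginal
  have : ∀ a : A, (∑ x : Fin n → A, if x i = a then w x else 0) * g a
      = ∑ x : Fin n → A, if x i = a then w x * g a else 0 := by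
    intro a
    rw [Finset.sum_mul]
    exact Finset.sum_congr rfl fun x _ => by split <;> simp
  rw [Finset.sum_congr rfl fun a _ => this a, Finset.sum_comm]
  exact Finset.sum_congr rfl fun x _ => by simp

lemma marginal_nonneg (w : (Fin n → A) → ℝ) (hw : ∀ x, 0 ≤ w x) (i : Fin n) (a : A) :
    0 ≤ marginal w i a :=
  Finset.sum_nonneg fun x _ => by split <;> simp [hw x]

lemma marginal_sum (w : (Fin n → A) → ℝ) (i : Fin n) :
    ∑ a, marginal w i a = ∑ x, w x := by
  unfold marginal
  rw [Finset.sum_comm]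
  exact Finset.sum_congr rfl fun x _ => by simp

lemma le_marginal (w : (Fin n → A) → ℝ) (hw : ∀ x, 0 ≤ w x) (i : Fin n) (x : Fin n → A) :
    w x ≤ marginal w i (x i) := by
  unfold marginal
  have := Finset.single_le_sum (f := fun y : Fin n → A => if y i = x i then w y else 0)
    (fun y _ => by by_cases h : y i = x i <;> simp [h, hw y]) (Finset.mem_univ x)
  simpa using this

lemma sum_mul_log_prod (w : (Fin n → A) → ℝ) (g : Fin n → A → ℝ)
    (h : ∀ x, w x ≠ 0 → ∀ i, g i (x i) ≠ 0) :
    ∑ x, w x * Real.log (∏ i, g i (x i)) =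
      ∑ i, ∑ a, marginal w i a * Real.log (g i a) := by
  have step : ∀ x : Fin n → A,
      w x * Real.log (∏ i, g i (x i)) = ∑ i, w x * Real.log (g i (x i)) := by
    intro x
    by_cases hw : w x = 0
    · simp [hw]
    · rw [Real.log_prod fun i _ => h x hw i, Finset.mul_sum]
  rw [Finset.sum_congr rfl fun x _ => step x, Finset.sum_comm]
  exact Finset.sum_congr rfl fun i _ => sum_mul_comp w i (fun a => Real.log (g i a))

lemma sum_prod_marginal (μ : (Fin n → A) → ℝ) (hμ : IsPMF μ) :
    ∑ x : Fin n → A, ∏ i, marginal μ i (x i) = 1 := by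
  classical
  rw [← Fintype.prod_sum]
  have : ∀ i : Fin n, ∑ a, marginal μ i a = 1 := by
    intro i; rw [marginal_sum, hμ.2]
  simp [this]

end aux

lemma log_sum_le {X : Type*} (S : Finset X) (a b : X → ℝ)
    (ha : ∀ x ∈ S, 0 ≤ a x) (hb : ∀ x ∈ S, 0 ≤ b x)
    (hab : ∀ x ∈ S, 0 < a x → 0 < b x) :
    ∑ x ∈ S, a x * Real.log (b x) - ∑ x ∈ S, a x * Real.log (a x) ≤
      (∑ x ∈ S, a x) * Real.log (∑ x ∈ S, b x)
        - (∑ x ∈ S, a x) * Real.log (∑ x ∈ S, a x) := by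
  set A := ∑ x ∈ S, a x with hA
  set B := ∑ x ∈ S, b x with hB
  rcases eq_or_lt_of_le (Finset.sum_nonneg ha) with h0 | hApos
  · have hz : ∀ x ∈ S, a x = 0 := by
      intro x hx
      exact (Finset.sum_eq_zero_iff_of_nonneg ha).1 h0.symm x hx
    have e1 : ∑ x ∈ S, a x * Real.log (b x) = 0 :=
      Finset.sum_eq_zero fun x hx => by rw [hz x hx, zero_mul]
    have e2 : ∑ x ∈ S, a x * Real.log (a x) = 0 :=
      Finset.sum_eq_zero fun x hx => by rw [hz x hx, zero_mul]
    have hA0 : A = 0 := by rw [hA, ← h0]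
    rw [e1, e2, hA0]; simp
  · have hBpos : 0 < B := by
      rcases eq_or_lt_of_le (Finset.sum_nonneg hb) with h0 | h
      · exfalso
        have hz : ∀ x ∈ S, b x = 0 := by
          intro x hx
          exact (Finset.sum_eq_zero_iff_of_nonneg hb).1 h0.symm x hx
        have : A = 0 := Finset.sum_eq_zero fun x hx => by
          by_contra hne
          have : 0 < a x := lt_of_le_of_ne (ha x hx) (Ne.symm hne)
          exact absurd (hz x hx) (ne_of_gt (hab x hx this))
        linarith
      · exact h
    have key : ∀ x ∈ S,
        a x * Real.log (b x) - a x * Real.log (a x)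
          + a x * (Real.log A - Real.log B) ≤ b x * (A / B) - a x := by
      intro x hx
      rcases eq_or_lt_of_le (ha x hx) with h0 | hax
      · rw [← h0]
        have := hb x hx
        have : 0 ≤ b x * (A / B) := mul_nonneg this (le_of_lt (div_pos hApos hBpos))
        simp; linarith
      · have hbx := hab x hx hax
        have ht : 0 < b x * A / (a x * B) := by positivity
        have hlog := Real.log_le_sub_one_of_pos ht
        have hexp : Real.log (b x * A / (a x * B)) =
            Real.log (b x) - Real.log (a x) + (Real.log A - Real.log B) := by
          rw [Real.log_div (by positivity) (by positivity),
            Real.log_mul (ne_of_gt hbx) (ne_of_gt hApos),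
            Real.log_mul (ne_of_gt hax) (ne_of_gt hBpos)]
          ring
        have := mul_le_mul_of_nonneg_left hlog (le_of_lt hax)
        rw [hexp] at this
        have heq : a x * (b x * A / (a x * B) - 1) = b x * (A / B) - a x := by
          field_simp
        rw [heq] at this
        nlinarith [this]
    have hsum := Finset.sum_le_sum key
    rw [Finset.sum_add_distrib] at hsum
    rw [Finset.sum_sub_distrib] at hsum
    rw [← Finset.sum_mul, ← hA] at hsum
    have e3 : ∑ x ∈ S, (b x * (A / B) - a x) = A - A := by
      rw [Finset.sum_sub_distrib, ← Finset.sum_mul, ← hB, ← hA]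
      field_simp
    rw [e3] at hsum
    nlinarith [hsum]

/-- If `μ(U) > 0` then `TC(μ(·|U)) ≤ (TC(μ) + log 2)/μ(U)`. -/
theorem totalCorr_cond_le {A : Type*} [Fintype A] [DecidableEq A] {n : ℕ}
    (μ : (Fin n → A) → ℝ) (hμ : IsPMF μ) (U : Finset (Fin n → A))
    (hU : 0 < ∑ x ∈ U, μ x) :
    totalCorr (fun x => if x ∈ U then μ x / (∑ y ∈ U, μ y) else 0) ≤
      (totalCorr μ + Real.log 2) / (∑ x ∈ U, μ x) := by
  classical
  obtain ⟨hμ0, hμ1⟩ := hμ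
  set p := ∑ x ∈ U, μ x with hp
  have hppos : 0 < p := hU
  have hpne : p ≠ 0 := ne_of_gt hppos
  set ν := fun x => if x ∈ U then μ x / p else 0 with hν
  set m := fun x : Fin n → A => ∏ i, marginal μ i (x i) with hm
  have hν0 : ∀ x, 0 ≤ ν x := by
    intro x; rw [hν]; dsimp only
    split
    · exact div_nonneg (hμ0 x) (le_of_lt hppos)
    · exact le_rfl
  have hνsum : ∑ x, ν x = 1 := by
    rw [hν]; dsimp only
    rw [Finset.sum_ite_mem, Finset.univ_inter, ← Finset.sum_div, ← hp, div_self hpne]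
  -- positivity transfer for marginals
  have hνμ : ∀ x, ν x ≠ 0 → μ x ≠ 0 := by
    intro x hx
    rw [hν] at hx; dsimp only at hx
    by_cases hxU : x ∈ U
    · rw [if_pos hxU] at hx
      intro h0; rw [h0, zero_div] at hx; exact hx rfl
    · rw [if_neg hxU] at hx; exact absurd rfl hx
  have hμpos : ∀ x, μ x ≠ 0 → 0 < μ x := fun x hx => lt_of_le_of_ne (hμ0 x) (Ne.symm hx)
  have hμm : ∀ x, μ x ≠ 0 → ∀ i, marginal μ i (x i) ≠ 0 := by
    intro x hx i
    exact ne_of_gt (lt_of_lt_of_le (hμpos x hx) (le_marginal μ hμ0 i x))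
  have hνm : ∀ x, ν x ≠ 0 → ∀ i, marginal μ i (x i) ≠ 0 :=
    fun x hx i => hμm x (hνμ x hx) i
  have hmpos : ∀ x, μ x ≠ 0 → 0 < m x := by
    intro x hx; rw [hm]
    exact Finset.prod_pos fun i _ =>
      lt_of_le_of_ne (marginal_nonneg μ hμ0 i (x i)) (Ne.symm (hμm x hx i))
  have hm0 : ∀ x, 0 ≤ m x := by
    intro x; rw [hm]
    exact Finset.prod_nonneg fun i _ => marginal_nonneg μ hμ0 i (x i)
  -- marginal of ν controlled by marginal of μ
  have hmargνμ : ∀ i a, marginal ν i a ≠ 0 → marginal μ i a ≠ 0 := by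
    intro i a hne h0
    apply hne
    have hle : marginal ν i a ≤ marginal μ i a / p := by
      unfold marginal
      rw [Finset.sum_div]
      apply Finset.sum_le_sum
      intro x _
      split
      · rw [hν]; dsimp only
        split
        · exact le_rfl
        · exact div_nonneg (hμ0 _) (le_of_lt hppos)
      · simp
    have := marginal_nonneg ν hν0 i a
    rw [h0, zero_div] at hle
    linarith
  -- Step A: Gibbs inequality against the product of μ-marginals
  have stepA : ∑ x, ν x * Real.log (m x) ≤
      ∑ i, ∑ a, marginal ν i a * Real.log (marginal ν i a) := by
    have := sum_mul_log_prod ν (fun i a => marginal μ i a) hνm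
    rw [hm]
    rw [this]
    apply Finset.sum_le_sum
    intro i _
    have hg := log_sum_le Finset.univ (marginal ν i) (marginal μ i)
      (fun a _ => marginal_nonneg ν hν0 i a)
      (fun a _ => marginal_nonneg μ hμ0 i a)
      (fun a _ hpos => lt_of_le_of_ne (marginal_nonneg μ hμ0 i a)
        (Ne.symm (hmargνμ i a (ne_of_gt hpos))))
    rw [marginal_sum ν i, marginal_sum μ i, hνsum, hμ1, Real.log_one] at hg
    simpa using hg
  -- totalCorr ν ≤ ∑ ν log ν - ∑ ν log m
  have hTCν : totalCorr ν ≤ (∑ x, ν x * Real.log (ν x)) - ∑ x, ν x * Real.log (m x) := by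
    rw [totalCorr, entropy_eq]
    have : ∀ i : Fin n, entropy (marginal ν i) = -∑ a, marginal ν i a * Real.log (marginal ν i a) :=
      fun i => entropy_eq _
    rw [Finset.sum_congr rfl fun i _ => this i, Finset.sum_neg_distrib]
    linarith
  -- Step B: rewrite the ν-sums in terms of μ-sums over U
  have hEν : ∑ x, ν x * Real.log (ν x) =
      (∑ x ∈ U, μ x * Real.log (μ x)) / p - Real.log p := by
    have hterm : ∀ x, ν x * Real.log (ν x) =
        if x ∈ U then μ x * Real.log (μ x) / p - μ x / p * Real.log p else 0 := by
      intro x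
      rw [hν]; dsimp only
      split
      · by_cases h0 : μ x = 0
        · simp [h0]
        · rw [Real.log_div h0 hpne]; ring
      · simp
    rw [Finset.sum_congr rfl fun x _ => hterm x, Finset.sum_ite_mem, Finset.univ_inter,
      Finset.sum_sub_distrib, ← Finset.sum_div, ← Finset.sum_mul, ← Finset.sum_div, ← hp,
      div_self hpne, one_mul]
  have hCν : ∑ x, ν x * Real.log (m x) = (∑ x ∈ U, μ x * Real.log (m x)) / p := by
    have hterm : ∀ x, ν x * Real.log (m x) =
        if x ∈ U then μ x * Real.log (m x) / p else 0 := by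
      intro x
      rw [hν]; dsimp only
      split
      · ring
      · simp
    rw [Finset.sum_congr rfl fun x _ => hterm x, Finset.sum_ite_mem, Finset.univ_inter,
      ← Finset.sum_div]
  -- Step C: log-sum inequality on Uᶜ
  set q := ∑ x ∈ Uᶜ, μ x with hq
  have hpq : p + q = 1 := by rw [hp, hq, Finset.sum_add_sum_compl, hμ1]
  have hq0 : 0 ≤ q := Finset.sum_nonneg fun x _ => hμ0 x
  have hmsum : ∑ x, m x = 1 := by
    rw [hm]; exact sum_prod_marginal μ ⟨hμ0, hμ1⟩
  have hB1 : ∑ x ∈ Uᶜ, m x ≤ 1 := by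
    rw [← hmsum]
    exact Finset.sum_le_sum_of_subset_of_nonneg (Finset.subset_univ _) fun x _ _ => hm0 x
  have hB0 : 0 ≤ ∑ x ∈ Uᶜ, m x := Finset.sum_nonneg fun x _ => hm0 x
  have hC := log_sum_le Uᶜ μ m (fun x _ => hμ0 x) (fun x _ => hm0 x)
    (fun x _ hpos => hmpos x (ne_of_gt hpos))
  have hqB : q * Real.log (∑ x ∈ Uᶜ, m x) ≤ 0 :=
    mul_nonpos_of_nonneg_of_nonpos hq0 (Real.log_nonpos hB0 hB1)
  have stepC : (∑ x ∈ Uᶜ, μ x * Real.log (m x)) - ∑ x ∈ Uᶜ, μ x * Real.log (μ x) ≤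
      -(q * Real.log q) := by
    rw [← hq] at hC
    linarith
  -- Step D: the full sums give totalCorr μ
  have stepD : (∑ x, μ x * Real.log (μ x)) - (∑ x, μ x * Real.log (m x)) = totalCorr μ := by
    rw [totalCorr, entropy_eq]
    have h1 : ∑ x, μ x * Real.log (m x) =
        ∑ i, ∑ a, marginal μ i a * Real.log (marginal μ i a) := by
      rw [hm]; exact sum_mul_log_prod μ (fun i a => marginal μ i a) hμm
    have h2 : ∀ i : Fin n, entropy (marginal μ i) =
        -∑ a, marginal μ i a * Real.log (marginal μ i a) := fun i => entropy_eq _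
    rw [h1, Finset.sum_congr rfl fun i _ => h2 i, Finset.sum_neg_distrib]
    ring
  -- split sums over U and Uᶜ
  have hsplitE : (∑ x ∈ U, μ x * Real.log (μ x)) + (∑ x ∈ Uᶜ, μ x * Real.log (μ x)) =
      ∑ x, μ x * Real.log (μ x) := Finset.sum_add_sum_compl U _
  have hsplitC : (∑ x ∈ U, μ x * Real.log (m x)) + (∑ x ∈ Uᶜ, μ x * Real.log (m x)) =
      ∑ x, μ x * Real.log (m x) := Finset.sum_add_sum_compl U _
  -- Step E: binary entropy bound
  have hbin : -(q * Real.log q) - p * Real.log p ≤ Real.log 2 := by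
    have hb := Real.binEntropy_le_log_two (p := p)
    rw [Real.binEntropy] at hb
    have h1p : 1 - p = q := by linarith
    rw [h1p, Real.log_inv, Real.log_inv] at hb
    linarith
  -- assemble
  have key : (∑ x ∈ U, μ x * Real.log (μ x)) - (∑ x ∈ U, μ x * Real.log (m x))
      - p * Real.log p ≤ totalCorr μ + Real.log 2 := by
    linarith
  have final : totalCorr ν ≤
      ((∑ x ∈ U, μ x * Real.log (μ x)) - (∑ x ∈ U, μ x * Real.log (m x))
        - p * Real.log p) / p := by
    have : ((∑ x ∈ U, μ x * Real.log (μ x)) - (∑ x ∈ U, μ x * Real.log (m x))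
        - p * Real.log p) / p =
        (∑ x ∈ U, μ x * Real.log (μ x)) / p - (∑ x ∈ U, μ x * Real.log (m x)) / p
          - Real.log p := by
      field_simp
    rw [this]
    linarith [hTCν, hEν, hCν]
  calc totalCorr ν ≤ _ := final
    _ ≤ (totalCorr μ + Real.log 2) / p := by gcongr
end

section
/- For any probability measure μ on Aⁿ and any r > 0 there exists a subset S ⊆ {1,…,n} with |S| ≥ (1-r)n such that the dual total correlation of the projection μ_S satisfies DTC(μ_S) ≤ TC(μ)/r. -/
open Finset

set_option linter.unusedSectionVars false

/-- Pushforward of a mass function along a map. -/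
noncomputable def push {Ω S : Type*} [Fintype Ω] [DecidableEq S]
    (p : Ω → ℝ) (f : Ω → S) : S → ℝ :=
  fun s => ∑ ω, if f ω = s then p ω else 0

/-- Shannon entropy of the random variable `f` under the mass function `p`. -/
noncomputable def entOf {Ω S : Type*} [Fintype Ω] [Fintype S] [DecidableEq S]
    (p : Ω → ℝ) (f : Ω → S) : ℝ :=
  entropy (push p f)

/-- Conditional Shannon entropy `H(f | g)` under the mass function `p`. -/
noncomputable def condEnt {Ω S T : Type*} [Fintype Ω] [Fintype S] [Fintype T]
    [DecidableEq S] [DecidableEq T] (p : Ω → ℝ) (f : Ω → S) (g : Ω → T) : ℝ :=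
  entOf p (fun ω => (f ω, g ω)) - entOf p g

/-- Dual total correlation `DTC(μ) = H(ξ) - ∑ i H(ξ i | ξ_{∖ i})` for a measure on `A^ι`. -/
noncomputable def dualTotalCorr {ι A : Type*} [Fintype ι] [DecidableEq ι]
    [Fintype A] [DecidableEq A] (μ : (ι → A) → ℝ) : ℝ :=
  entOf μ id -
    ∑ i, condEnt μ (fun x => x i) (fun x => fun j : {j // j ≠ i} => x (j : ι))

section Basics

variable {Ω S T : Type*} [Fintype Ω] [Fintype S] [Fintype T] [DecidableEq S] [DecidableEq T]

lemma push_nonneg (p : Ω → ℝ) (hp : ∀ ω, 0 ≤ p ω) (f : Ω → S) (s : S) : 0 ≤ push p f s :=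
  Finset.sum_nonneg fun ω _ => by split <;> simp [hp ω]

lemma sum_push (p : Ω → ℝ) (f : Ω → S) : ∑ s, push p f s = ∑ ω, p ω := by
  simp only [push]
  rw [Finset.sum_comm]
  refine Finset.sum_congr rfl fun ω _ => ?_
  simp [Finset.sum_ite_eq]

lemma push_le (p : Ω → ℝ) (hp : ∀ ω, 0 ≤ p ω) (f : Ω → S) (s : S) :
    push p f s ≤ ∑ ω, p ω := by
  apply Finset.sum_le_sum
  intro ω _
  split <;> simp [hp ω]

lemma push_push (p : Ω → ℝ) (f : Ω → S) (g : S → T) :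
    push (push p f) g = push p (fun ω => g (f ω)) := by
  funext t
  simp only [push]
  have h1 : ∀ s : S, (if g s = t then ∑ ω, (if f ω = s then p ω else 0) else 0)
      = ∑ ω, (if f ω = s ∧ g s = t then p ω else 0) := by
    intro s; split_ifs with h
    · exact Finset.sum_congr rfl fun ω _ => by simp [h]
    · exact (Finset.sum_eq_zero fun ω _ => by simp [h]).symm
  simp only [h1]
  rw [Finset.sum_comm]
  refine Finset.sum_congr rfl fun ω _ => ?_
  simp [ite_and, Finset.sum_ite_eq]

lemma entOf_push (p : Ω → ℝ) (f : Ω → S) (g : S → T) :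
    entOf (push p f) g = entOf p (fun ω => g (f ω)) := by
  rw [entOf, push_push]; rfl

lemma entOf_comp_injective (p : Ω → ℝ) {g : S → T} (hg : Function.Injective g) (f : Ω → S) :
    entOf p (fun ω => g (f ω)) = entOf p f := by
  unfold entOf entropy
  have hzero : ∀ t ∈ (univ : Finset T), t ∉ univ.image g →
      Real.negMulLog (push p (fun ω => g (f ω)) t) = 0 := by
    intro t _ ht
    have : push p (fun ω => g (f ω)) t = 0 := by
      apply Finset.sum_eq_zero
      intro ω _
      have : g (f ω) ≠ t := fun h => ht (Finset.mem_image.2 ⟨f ω, mem_univ _, h⟩)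
      simp [this]
    simp [this]
  rw [← Finset.sum_subset (Finset.subset_univ (univ.image g)) hzero,
      Finset.sum_image (fun a _ b _ h => hg h)]
  refine Finset.sum_congr rfl fun s _ => ?_
  congr 1
  apply Finset.sum_congr rfl fun ω _ => ?_
  simp [hg.eq_iff]

lemma entOf_nonneg (p : Ω → ℝ) (hp : IsPMF p) (f : Ω → S) : 0 ≤ entOf p f := by
  obtain ⟨h0, h1⟩ := hp
  apply Finset.sum_nonneg
  intro s _
  exact Real.negMulLog_nonneg (push_nonneg p h0 f s) (h1 ▸ push_le p h0 f s)

lemma push_pair_fst (p : Ω → ℝ) (f : Ω → S) (g : Ω → T) (s : S) :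
    push p f s = ∑ t, push p (fun ω => (f ω, g ω)) (s, t) := by
  simp only [push]
  rw [Finset.sum_comm]
  refine Finset.sum_congr rfl fun ω _ => ?_
  simp [Prod.ext_iff, ite_and, Finset.sum_ite_eq]

lemma push_pair_snd (p : Ω → ℝ) (f : Ω → S) (g : Ω → T) (t : T) :
    push p g t = ∑ s, push p (fun ω => (f ω, g ω)) (s, t) := by
  simp only [push]
  rw [Finset.sum_comm]
  refine Finset.sum_congr rfl fun ω _ => ?_
  simp [Prod.ext_iff, ite_and, Finset.sum_ite_eq]

lemma aux_log (a b c : ℝ) (ha : 0 ≤ a) (hb : a ≤ b) (hc : a ≤ c) :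
    Real.negMulLog a ≤ -(a * Real.log (b * c)) + (b * c - a) := by
  rcases ha.eq_or_lt with h | h
  · have h' : a = 0 := h.symm
    subst h'
    have : 0 ≤ b * c := mul_nonneg hb hc
    simp [Real.negMulLog, this]
  · have hb0 : 0 < b := lt_of_lt_of_le h hb
    have hc0 : 0 < c := lt_of_lt_of_le h hc
    have hbc : 0 < b * c := mul_pos hb0 hc0
    have h1 : Real.log (b * c / a) ≤ b * c / a - 1 :=
      Real.log_le_sub_one_of_pos (by positivity)
    rw [Real.log_div hbc.ne' h.ne'] at h1
    have h2 : a * (Real.log (b * c) - Real.log a) ≤ a * (b * c / a - 1) :=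
      mul_le_mul_of_nonneg_left h1 h.le
    have h3 : a * (b * c / a - 1) = b * c - a := by field_simp
    rw [h3, mul_sub] at h2
    simp only [Real.negMulLog]
    linarith

lemma entOf_pair_le (p : Ω → ℝ) (hp : IsPMF p) (f : Ω → S) (g : Ω → T) :
    entOf p (fun ω => (f ω, g ω)) ≤ entOf p f + entOf p g := by
  obtain ⟨h0, h1⟩ := hp
  set P := push p (fun ω => (f ω, g ω)) with hP
  set Q := push p f with hQ
  set R := push p g with hR
  have hP0 : ∀ st, 0 ≤ P st := push_nonneg p h0 _
  have hQm : ∀ s, Q s = ∑ t, P (s, t) := push_pair_fst p f g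
  have hRm : ∀ t, R t = ∑ s, P (s, t) := push_pair_snd p f g
  have hPleQ : ∀ s t, P (s, t) ≤ Q s := by
    intro s t
    rw [hQm s]
    exact Finset.single_le_sum (fun t _ => hP0 (s, t)) (mem_univ t)
  have hPleR : ∀ s t, P (s, t) ≤ R t := by
    intro s t
    rw [hRm t]
    exact Finset.single_le_sum (fun s _ => hP0 (s, t)) (mem_univ s)
  have key : ∀ st : S × T, Real.negMulLog (P st) ≤
      -(P st * Real.log (Q st.1 * R st.2)) + (Q st.1 * R st.2 - P st) := fun st =>
    aux_log _ _ _ (hP0 st) (hPleQ st.1 st.2) (hPleR st.1 st.2)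
  have step1 : entOf p (fun ω => (f ω, g ω)) ≤
      ∑ st : S × T, (-(P st * Real.log (Q st.1 * R st.2)) + (Q st.1 * R st.2 - P st)) :=
    Finset.sum_le_sum fun st _ => key st
  have sumP : ∑ st : S × T, P st = 1 := by rw [hP, sum_push, h1]
  have sumQ : ∑ s, Q s = 1 := by rw [hQ, sum_push, h1]
  have sumR : ∑ t, R t = 1 := by rw [hR, sum_push, h1]
  have split : ∑ st : S × T, (-(P st * Real.log (Q st.1 * R st.2)) + (Q st.1 * R st.2 - P st))
      = (∑ st : S × T, -(P st * Real.log (Q st.1)))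
        + (∑ st : S × T, -(P st * Real.log (R st.2)))
        + ((∑ st : S × T, Q st.1 * R st.2) - ∑ st : S × T, P st) := by
    rw [← Finset.sum_sub_distrib, ← Finset.sum_add_distrib, ← Finset.sum_add_distrib]
    refine Finset.sum_congr rfl fun st _ => ?_
    rcases eq_or_lt_of_le (hP0 st) with hz | hpos
    · simp [← hz]
    · have hq : Q st.1 ≠ 0 := (lt_of_lt_of_le hpos (hPleQ st.1 st.2)).ne'
      have hr : R st.2 ≠ 0 := (lt_of_lt_of_le hpos (hPleR st.1 st.2)).ne'
      rw [Real.log_mul hq hr]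
      ring
  have termQ : ∑ st : S × T, -(P st * Real.log (Q st.1)) = entOf p f := by
    rw [Fintype.sum_prod_type]
    unfold entOf entropy
    refine Finset.sum_congr rfl fun s _ => ?_
    have e1 : ∑ t, -(P (s, t) * Real.log (Q s)) = -((∑ t, P (s, t)) * Real.log (Q s)) := by
      rw [Finset.sum_mul]; simp
    rw [e1, ← hQm s, Real.negMulLog, neg_mul]
  have termR : ∑ st : S × T, -(P st * Real.log (R st.2)) = entOf p g := by
    rw [Fintype.sum_prod_type, Finset.sum_comm]
    unfold entOf entropy
    refine Finset.sum_congr rfl fun t _ => ?_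
    have e1 : ∑ s, -(P (s, t) * Real.log (R t)) = -((∑ s, P (s, t)) * Real.log (R t)) := by
      rw [Finset.sum_mul]; simp
    rw [e1, ← hRm t, Real.negMulLog, neg_mul]
  have termQR : ∑ st : S × T, Q st.1 * R st.2 = 1 := by
    rw [Fintype.sum_prod_type]
    simp only [← Finset.mul_sum, sumR]
    simp [sumQ]
  rw [split, termQ, termR, termQR, sumP] at step1
  linarith

end Basics

section Main

variable {A : Type*} [Fintype A] [DecidableEq A] {n : ℕ}

/-- Entropy of the `S`-marginal. -/
noncomputable def eS (μ : (Fin n → A) → ℝ) (S : Finset (Fin n)) : ℝ :=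
  entOf μ (fun x => fun j : {j // j ∈ S} => x (j : Fin n))

/-- Entropy of the `i`-th coordinate. -/
noncomputable def hI (μ : (Fin n → A) → ℝ) (i : Fin n) : ℝ :=
  entOf μ (fun x => x i)

noncomputable def TT (μ : (Fin n → A) → ℝ) (S : Finset (Fin n)) : ℝ :=
  (∑ i ∈ S, hI μ i) - eS μ S

noncomputable def DD (μ : (Fin n → A) → ℝ) (S : Finset (Fin n)) : ℝ :=
  eS μ S - ∑ i ∈ S, (eS μ S - eS μ (S.erase i))

lemma eS_empty (μ : (Fin n → A) → ℝ) (hμ : IsPMF μ) : eS μ (∅ : Finset (Fin n)) = 0 := by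
  unfold eS entOf entropy
  have hval : ∀ y : ({j // j ∈ (∅ : Finset (Fin n))} → A),
      push μ (fun x => fun j : {j // j ∈ (∅ : Finset (Fin n))} => x (j : Fin n)) y = 1 := by
    intro y
    have hfn : ∀ x : Fin n → A,
        (fun j : {j // j ∈ (∅ : Finset (Fin n))} => x (j : Fin n)) = y := by
      intro x; funext j; exact absurd j.2 (Finset.notMem_empty _)
    simp only [push, hfn, if_true]
    exact hμ.2
  simp [hval, Real.negMulLog_one]

lemma eS_insert_le (μ : (Fin n → A) → ℝ) (hμ : IsPMF μ) {i : Fin n} {S : Finset (Fin n)}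
    (hi : i ∉ S) : eS μ (insert i S) ≤ hI μ i + eS μ S := by
  classical
  set g : ({j // j ∈ insert i S} → A) → A × ({j // j ∈ S} → A) :=
    fun y => (y ⟨i, Finset.mem_insert_self i S⟩,
      fun j => y ⟨j.1, Finset.mem_insert_of_mem j.2⟩) with hg
  have hginj : Function.Injective g := by
    intro y1 y2 h
    have h1 := congrArg Prod.fst h
    have h2 := congrArg Prod.snd h
    funext j
    rcases Finset.mem_insert.1 j.2 with hji | hjS
    · have : j = ⟨i, Finset.mem_insert_self i S⟩ := Subtype.ext hji
      rw [this]; exact h1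
    · exact congrFun h2 ⟨j.1, hjS⟩
  have key : eS μ (insert i S)
      = entOf μ (fun x => (x i, fun j : {j // j ∈ S} => x (j : Fin n))) := by
    unfold eS
    exact (entOf_comp_injective μ hginj _).symm
  rw [key]
  exact entOf_pair_le μ hμ _ _

lemma eS_erase_le (μ : (Fin n → A) → ℝ) (hμ : IsPMF μ) {i : Fin n} {S : Finset (Fin n)}
    (hi : i ∈ S) : eS μ S ≤ hI μ i + eS μ (S.erase i) := by
  conv_lhs => rw [← Finset.insert_erase hi]
  exact eS_insert_le μ hμ (Finset.notMem_erase i S)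

lemma TT_nonneg (μ : (Fin n → A) → ℝ) (hμ : IsPMF μ) (S : Finset (Fin n)) : 0 ≤ TT μ S := by
  classical
  induction S using Finset.induction_on with
  | empty => simp [TT, eS_empty μ hμ]
  | @insert i S hi IH =>
    have h1 := eS_insert_le μ hμ hi
    have h2 : ∑ j ∈ insert i S, hI μ j = hI μ i + ∑ j ∈ S, hI μ j :=
      Finset.sum_insert hi
    unfold TT at *
    linarith

lemma TT_erase (μ : (Fin n → A) → ℝ) {i : Fin n} {S : Finset (Fin n)} (hi : i ∈ S) :
    TT μ S = TT μ (S.erase i) + (hI μ i + eS μ (S.erase i) - eS μ S) := by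
  unfold TT
  rw [← Finset.add_sum_erase _ _ hi]
  ring

lemma sum_I (μ : (Fin n → A) → ℝ) (S : Finset (Fin n)) :
    ∑ i ∈ S, (hI μ i + eS μ (S.erase i) - eS μ S) = TT μ S + DD μ S := by
  have h : ∀ i, hI μ i + eS μ (S.erase i) - eS μ S
      = hI μ i - (eS μ S - eS μ (S.erase i)) := fun i => by ring
  simp only [h]
  rw [Finset.sum_sub_distrib]
  unfold TT DD
  ring

lemma DD_empty (μ : (Fin n → A) → ℝ) (hμ : IsPMF μ) : DD μ (∅ : Finset (Fin n)) = 0 := by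
  simp [DD, eS_empty μ hμ]


lemma DD_eq (μ : (Fin n → A) → ℝ) (S : Finset (Fin n)) :
    dualTotalCorr (push μ (fun x => fun j : {j // j ∈ S} => x (j : Fin n))) = DD μ S := by
  classical
  set res : (Fin n → A) → ({j // j ∈ S} → A) :=
    fun x => fun j : {j // j ∈ S} => x (j : Fin n) with hres
  unfold dualTotalCorr condEnt
  have hid : entOf (push μ res) id = eS μ S := by
    rw [entOf_push]; rfl
  have hterm : ∀ i : {j // j ∈ S},
      (entOf (push μ res)
          (fun x => (x i, fun j : {j // j ≠ i} => x (j : {j // j ∈ S})))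
        - entOf (push μ res) (fun x => fun j : {j // j ≠ i} => x (j : {j // j ∈ S})))
      = eS μ S - eS μ (S.erase (i : Fin n)) := by
    intro i
    have hpair : entOf (push μ res)
        (fun x => (x i, fun j : {j // j ≠ i} => x (j : {j // j ∈ S}))) = eS μ S := by
      rw [entOf_push]
      set g : ({j // j ∈ S} → A) → A × ({j : {j // j ∈ S} // j ≠ i} → A) :=
        fun y => (y i, fun j => y (j : {j // j ∈ S})) with hg
      have hginj : Function.Injective g := by
        intro y1 y2 h
        have h1 := congrArg Prod.fst h
        have h2 := congrArg Prod.snd h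
        funext j
        by_cases hj : j = i
        · rw [hj]; exact h1
        · exact congrFun h2 ⟨j, hj⟩
      exact entOf_comp_injective μ hginj res
    have hcond : entOf (push μ res)
        (fun x => fun j : {j // j ≠ i} => x (j : {j // j ∈ S}))
        = eS μ (S.erase (i : Fin n)) := by
      rw [entOf_push]
      set Φ : ({j : {j // j ∈ S} // j ≠ i} → A) → ({j // j ∈ S.erase (i : Fin n)} → A) :=
        fun y => fun j => y ⟨⟨j.1, Finset.mem_of_mem_erase j.2⟩,
          fun h => (Finset.ne_of_mem_erase j.2) (congrArg Subtype.val h)⟩ with hΦ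
      have hΦinj : Function.Injective Φ := by
        intro y1 y2 h
        funext j
        have hjv : ((j : {j // j ∈ S}) : Fin n) ≠ (i : Fin n) :=
          fun hv => j.2 (Subtype.ext hv)
        have hjmem : ((j : {j // j ∈ S}) : Fin n) ∈ S.erase (i : Fin n) :=
          Finset.mem_erase.2 ⟨hjv, (j : {j // j ∈ S}).2⟩
        exact congrFun h ⟨((j : {j // j ∈ S}) : Fin n), hjmem⟩
      have h2 := entOf_comp_injective μ hΦinj
        (fun x : Fin n → A => fun j : {j : {j // j ∈ S} // j ≠ i} =>
          x ((j : {j // j ∈ S}) : Fin n))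
      exact h2.symm
    rw [hpair, hcond]
  rw [hid, Finset.sum_congr rfl (fun i _ => hterm i),
    Finset.sum_coe_sort S (fun i => eS μ S - eS μ (S.erase i))]
  rfl

lemma TT_univ (μ : (Fin n → A) → ℝ) : totalCorr μ = TT μ Finset.univ := by
  have h1 : push μ (id : (Fin n → A) → (Fin n → A)) = μ := by
    funext a
    simp [push, Finset.sum_ite_eq']
  have hinj : Function.Injective
      (fun (x : Fin n → A) => fun j : {j // j ∈ (Finset.univ : Finset (Fin n))} =>
        x (j : Fin n)) := by
    intro y1 y2 h
    funext j
    exact congrFun h ⟨j, Finset.mem_univ j⟩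
  have h2 : eS μ Finset.univ = entropy μ := by
    have h3 : eS μ Finset.univ = entOf μ id := entOf_comp_injective μ hinj id
    rw [h3, entOf, h1]
  unfold totalCorr TT
  rw [h2]
  rfl

lemma greedy (μ : (Fin n → A) → ℝ) (hμ : IsPMF μ) {r : ℝ} (hr : 0 < r) :
    ∀ k : ℕ, ∀ S : Finset (Fin n), S.card ≤ k →
    ∃ S', S' ⊆ S ∧ DD μ S' ≤ TT μ Finset.univ / r ∧
      (S' = S ∨ TT μ S' < TT μ S
        - ((S.card : ℝ) - S'.card) * (TT μ Finset.univ / (r * n))) := by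
  have ht0 : 0 ≤ TT μ Finset.univ := TT_nonneg μ hμ _
  intro k
  induction k with
  | zero =>
    intro S hS
    have hSe : S = ∅ := Finset.card_eq_zero.1 (Nat.le_zero.1 hS)
    subst hSe
    exact ⟨∅, Finset.Subset.refl _, by rw [DD_empty μ hμ]; positivity, Or.inl rfl⟩
  | succ k IH =>
    intro S hS
    by_cases hD : DD μ S ≤ TT μ Finset.univ / r
    · exact ⟨S, Finset.Subset.refl _, hD, Or.inl rfl⟩
    push_neg at hD
    have hSne : S.Nonempty := by
      rcases S.eq_empty_or_nonempty with rfl | h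
      · rw [DD_empty μ hμ] at hD
        exact absurd hD (not_lt.2 (by positivity))
      · exact h
    have hcard0 : 0 < S.card := Finset.card_pos.2 hSne
    have hcardR : 0 < (S.card : ℝ) := by exact_mod_cast hcard0
    have hsum : ∑ _i ∈ S, (DD μ S / S.card)
        ≤ ∑ i ∈ S, (hI μ i + eS μ (S.erase i) - eS μ S) := by
      rw [sum_I μ S, Finset.sum_const, nsmul_eq_mul,
        mul_div_cancel₀ _ (ne_of_gt hcardR)]
      have := TT_nonneg μ hμ S
      linarith
    obtain ⟨i, hiS, hIge⟩ := Finset.exists_le_of_sum_le hSne hsum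
    have hnpos : 0 < (n : ℝ) := by
      obtain ⟨i0, _⟩ := hSne
      exact_mod_cast i0.pos
    have hcardn : (S.card : ℝ) ≤ n := by
      have := Finset.card_le_card (Finset.subset_univ S)
      rw [Finset.card_univ, Fintype.card_fin] at this
      exact_mod_cast this
    have hkey : TT μ Finset.univ / (r * n) < hI μ i + eS μ (S.erase i) - eS μ S := by
      have h1 : TT μ Finset.univ / (r * n) ≤ TT μ Finset.univ / (r * S.card) := by
        gcongr
      have h2 : TT μ Finset.univ / (r * S.card)
          = (TT μ Finset.univ / r) / S.card := by rw [div_div]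
      have h3 : (TT μ Finset.univ / r) / S.card < DD μ S / S.card := by gcongr
      calc TT μ Finset.univ / (r * n) ≤ TT μ Finset.univ / (r * S.card) := h1
        _ = (TT μ Finset.univ / r) / S.card := h2
        _ < DD μ S / S.card := h3
        _ ≤ hI μ i + eS μ (S.erase i) - eS μ S := hIge
    have herase_card : (S.erase i).card ≤ k := by
      rw [Finset.card_erase_of_mem hiS]; omega
    obtain ⟨S', hsub, hD', hcase⟩ := IH (S.erase i) herase_card
    refine ⟨S', hsub.trans (Finset.erase_subset i S), hD', Or.inr ?_⟩
    have hTT := TT_erase μ hiS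
    have hce : ((S.erase i).card : ℝ) = (S.card : ℝ) - 1 := by
      rw [Finset.card_erase_of_mem hiS]
      have h1c : 1 ≤ S.card := hcard0
      push_cast [h1c]
      ring
    have hc0 : 0 ≤ TT μ Finset.univ / (r * n) := by positivity
    rcases hcase with rfl | hlt
    · rw [hce]
      have hone : (S.card : ℝ) - ((S.card : ℝ) - 1) = 1 := by ring
      rw [hone, one_mul]
      linarith
    · rw [hce] at hlt
      have hring : ((S.card : ℝ) - S'.card) * (TT μ Finset.univ / (r * n))
          = (TT μ Finset.univ / (r * n))
            + (((S.card : ℝ) - 1) - S'.card) * (TT μ Finset.univ / (r * n)) := by ring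
      linarith

end Main

/-- For any `μ ∈ Pr(Aⁿ)` and `r > 0` there is `S ⊆ [n]` with `|S| ≥ (1-r)n` and
`DTC(μ_S) ≤ TC(μ)/r`. -/
theorem exists_subset_dtc_le {A : Type*} [Fintype A] [DecidableEq A] {n : ℕ}
    (μ : (Fin n → A) → ℝ) (hμ : IsPMF μ) (r : ℝ) (hr : 0 < r) :
    ∃ S : Finset (Fin n), (1 - r) * n ≤ (S.card : ℝ) ∧
      dualTotalCorr (push μ (fun x => fun j : {j // j ∈ S} => x (j : Fin n))) ≤
        totalCorr μ / r := by
  classical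
  obtain ⟨S', hsub, hD, hcase⟩ := greedy μ hμ hr (Finset.univ : Finset (Fin n)).card
    Finset.univ le_rfl
  have huniv : (((Finset.univ : Finset (Fin n)).card : ℕ) : ℝ) = n := by simp
  refine ⟨S', ?_, ?_⟩
  · rcases hcase with rfl | hlt
    · rw [huniv]
      nlinarith [mul_nonneg hr.le (Nat.cast_nonneg (α := ℝ) n)]
    · rcases Nat.eq_zero_or_pos n with hn0 | hn0
      · subst hn0
        simp
      · have hnpos : (0 : ℝ) < n := by exact_mod_cast hn0
        rw [huniv] at hlt
        have h0 : 0 ≤ TT μ S' := TT_nonneg μ hμ S'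
        have ht0 : 0 ≤ TT μ Finset.univ := TT_nonneg μ hμ _
        have hrn : (0 : ℝ) < r * n := mul_pos hr hnpos
        have ht0c : TT μ Finset.univ = (TT μ Finset.univ / (r * n)) * (r * n) :=
          (div_mul_cancel₀ _ hrn.ne').symm
        have hc0 : 0 ≤ TT μ Finset.univ / (r * n) := by positivity
        rcases hc0.eq_or_lt with hceq | hcpos
        · exfalso
          have hcz : TT μ Finset.univ / (r * n) = 0 := hceq.symm
          rw [hcz, mul_zero, sub_zero] at hlt
          rw [hcz, zero_mul] at ht0c
          linarith
        · by_contra hcon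
          push_neg at hcon
          have h3 : r * n < (n : ℝ) - S'.card := by linarith
          have h4 : (r * n) * (TT μ Finset.univ / (r * n))
              < ((n : ℝ) - S'.card) * (TT μ Finset.univ / (r * n)) :=
            mul_lt_mul_of_pos_right h3 hcpos
          have h5 : (TT μ Finset.univ / (r * n)) * (r * n)
              = (r * n) * (TT μ Finset.univ / (r * n)) := mul_comm _ _
          linarith
  · rw [DD_eq μ S', TT_univ μ]
    exact hD
end
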